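/- For every integer q ≥ 1 there is a constant C_q such that for all integers d ≥ q and all choices of indices j_1,…,j_q, k_1,…,k_q, j_1',…,j_q', k_1',…,k_q' ∈ {1,…,d}: | E[ ψ_{j_1 k_1} ⋯ ψ_{j_q k_q} · conj(ψ_{j_1' k_1'}) ⋯ conj(ψ_{j_q' k_q'}) ] | ≤ C_q · d^{−q}. -/

import Mathlib

open Complex Finset

noncomputable def wroot (n : ℕ) : ℂ := Complex.exp (2 * Real.pi * Complex.I / n)

lemma wroot_abs (n : ℕ) : ‖wroot n‖ = 1 := by
  rw [wroot, Complex.norm_exp]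
  norm_num [Complex.div_re, Complex.mul_re, Complex.mul_im]

lemma wroot_ne_zero (n : ℕ) : wroot n ≠ 0 := Complex.exp_ne_zero _

lemma wroot_prim {n : ℕ} (hn : n ≠ 0) : IsPrimitiveRoot (wroot n) n := by
  simpa [wroot] using Complex.isPrimitiveRoot_exp n hn

lemma conj_wroot (n : ℕ) : (starRingEnd ℂ) (wroot n) = (wroot n)⁻¹ :=
  (Complex.inv_eq_conj (wroot_abs n)).symm

/-- orthogonality of characters -/
lemma wroot_ortho {m : ℕ} (hm : 0 < m) {a b : ℕ} (ha : a < m) (hb : b < m) :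
    ∑ e : Fin m, (wroot m) ^ (a * (e : ℕ)) * (starRingEnd ℂ) ((wroot m) ^ (b * (e : ℕ)))
      = if a = b then (m : ℂ) else 0 := by
  have hne := wroot_ne_zero m
  have hterm : ∀ e : ℕ, (wroot m) ^ (a * e) * (starRingEnd ℂ) ((wroot m) ^ (b * e))
      = ((wroot m) ^ ((a : ℤ) - b)) ^ e := by
    intro e
    rw [map_pow, conj_wroot]
    rw [← zpow_natCast (wroot m) (a * e), ← zpow_natCast (wroot m)⁻¹ (b * e),
      inv_zpow, ← zpow_neg, ← zpow_add₀ hne]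
    rw [← zpow_natCast ((wroot m) ^ ((a : ℤ) - b)) e, ← zpow_mul]
    congr 1
    push_cast
    ring
  simp only [hterm]
  rcases eq_or_ne a b with h | h
  · simp [h, Finset.card_univ]
  · rw [if_neg h]
    have hη1 : (wroot m) ^ ((a : ℤ) - b) ≠ 1 := by
      intro h1
      have hdvd := ((wroot_prim hm.ne').zpow_eq_one_iff_dvd _).mp h1
      have : (a : ℤ) - b = 0 := Int.eq_zero_of_abs_lt_dvd hdvd (by rw [abs_lt]; omega)
      omega
    have hηm : ((wroot m) ^ ((a : ℤ) - b)) ^ m = 1 := by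
      rw [← zpow_natCast, ← zpow_mul, mul_comm, zpow_mul, zpow_natCast,
        (wroot_prim hm.ne').pow_eq_one, one_zpow]
    rw [Fin.sum_univ_eq_sum_range, geom_sum_eq hη1, hηm]
    simp

noncomputable def gmat (d m : ℕ) (ε : Fin d → Fin m) : Matrix (Fin d) (Fin d) ℂ :=
  fun a b => (Real.sqrt d : ℂ)⁻¹ * (wroot d) ^ ((a : ℕ) * (b : ℕ)) * (wroot m) ^ ((ε b : ℕ))

lemma normSq_wroot_pow (n e : ℕ) : (starRingEnd ℂ) ((wroot n) ^ e) * (wroot n) ^ e = 1 := by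
  rw [mul_comm, Complex.mul_conj]
  norm_cast
  rw [← Complex.sq_norm, norm_pow, wroot_abs, one_pow, one_pow]

lemma gmat_mem {d m : ℕ} (hd : 0 < d) (ε : Fin d → Fin m) :
    gmat d m ε ∈ Matrix.unitaryGroup (Fin d) ℂ := by
  rw [Matrix.mem_unitaryGroup_iff']
  ext a b
  rw [Matrix.mul_apply, Matrix.one_apply]
  have hsd : (starRingEnd ℂ) ((Real.sqrt d : ℂ))⁻¹ * ((Real.sqrt d : ℂ))⁻¹ = (d : ℂ)⁻¹ := by
    rw [map_inv₀, Complex.conj_ofReal, ← mul_inv, ← Complex.ofReal_mul,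
      Real.mul_self_sqrt (by positivity)]
    norm_num
  have hstep : ∀ l : Fin d,
      (Matrix.conjTranspose (gmat d m ε)) a l * gmat d m ε l b
        = ((d : ℂ)⁻¹ * ((starRingEnd ℂ) ((wroot m) ^ ((ε a : ℕ))) * (wroot m) ^ ((ε b : ℕ))))
          * ((wroot d) ^ ((b : ℕ) * (l : ℕ)) * (starRingEnd ℂ) ((wroot d) ^ ((a : ℕ) * (l : ℕ)))) := by
    intro l
    rw [Matrix.conjTranspose_apply]
    simp only [gmat, Complex.star_def, map_mul]
    rw [← hsd, mul_comm ((l : ℕ)) ((b : ℕ))]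
    rw [mul_comm ((l : ℕ)) ((a : ℕ))]
    ring
  rw [Matrix.star_eq_conjTranspose] at *
  simp only [hstep]
  rw [← Finset.mul_sum, wroot_ortho hd b.isLt a.isLt]
  rcases eq_or_ne a b with h | h
  · subst h
    rw [if_pos rfl, if_pos rfl, normSq_wroot_pow, mul_one]
    exact inv_mul_cancel₀ (by exact_mod_cast hd.ne')
  · rw [if_neg (fun hh => h (Fin.ext hh).symm), if_neg h, mul_zero]

lemma col_normSq {d : ℕ} (Ψ : Matrix.unitaryGroup (Fin d) ℂ) (k : Fin d) :
    ∑ l : Fin d, Complex.normSq (Ψ.1 l k) = 1 := by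
  have h := (Matrix.mem_unitaryGroup_iff'.mp Ψ.2)
  have h2 := congrFun (congrFun h k) k
  rw [Matrix.mul_apply, Matrix.one_apply_eq] at h2
  have h3 : ∑ l, ((Complex.normSq (Ψ.1 l k) : ℂ)) = 1 := by
    rw [← h2]
    refine Finset.sum_congr rfl fun l _ => ?_
    rw [Matrix.star_eq_conjTranspose, Matrix.conjTranspose_apply, Complex.star_def,
      mul_comm, Complex.mul_conj]
  have := congrArg Complex.re h3
  simpa using this

lemma entry_norm_le {d : ℕ} (Ψ : Matrix.unitaryGroup (Fin d) ℂ) (j k : Fin d) :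
    ‖Ψ.1 j k‖ ≤ 1 := by
  have h := col_normSq Ψ k
  have h1 : Complex.normSq (Ψ.1 j k) ≤ 1 := by
    rw [← h]
    exact Finset.single_le_sum (f := fun l => Complex.normSq (Ψ.1 l k)) (fun l _ => Complex.normSq_nonneg _) (Finset.mem_univ j)
  have h2 : ‖Ψ.1 j k‖ ^ 2 ≤ 1 := by
    rw [Complex.sq_norm]; exact h1
  nlinarith [norm_nonneg (Ψ.1 j k)]

/-- number of functions with the same fiber counts is at most q! -/
lemma count_matching_le {q d : ℕ} (f : Fin q → Fin d) :
    (Finset.univ.filter fun g : Fin q → Fin d =>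
        ∀ l, (Finset.univ.filter fun i => g i = l).card
            = (Finset.univ.filter fun i => f i = l).card).card ≤ q.factorial := by
  classical
  have hperm : ∀ g ∈ (Finset.univ.filter fun g : Fin q → Fin d =>
      ∀ l, (Finset.univ.filter fun i => g i = l).card
          = (Finset.univ.filter fun i => f i = l).card),
      List.ofFn g ∈ (List.ofFn f).permutations.toFinset := by
    intro g hg
    rw [Finset.mem_filter] at hg
    rw [List.mem_toFinset, List.mem_permutations]
    have hmult : Multiset.map g Finset.univ.val = Multiset.map f Finset.univ.val := by
      ext l
      rw [Multiset.count_map, Multiset.count_map]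
      have := hg.2 l
      simp only [Finset.card_filter] at this
      have h' := this
      simp [Multiset.filter_congr, eq_comm] at h' ⊢
      exact h'
    have : (List.ofFn g : Multiset (Fin d)) = (List.ofFn f : Multiset (Fin d)) := by
      rw [List.ofFn_eq_map, List.ofFn_eq_map]
      simpa [Fin.univ_def] using hmult
    exact Multiset.coe_eq_coe.mp this
  calc (Finset.univ.filter fun g : Fin q → Fin d =>
        ∀ l, (Finset.univ.filter fun i => g i = l).card
            = (Finset.univ.filter fun i => f i = l).card).card
      ≤ (List.ofFn f).permutations.toFinset.card :=
        Finset.card_le_card_of_injOn (fun g => List.ofFn g) hperm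
          (fun g1 _ g2 _ h => List.ofFn_injective h)
    _ ≤ (List.ofFn f).permutations.length := List.toFinset_card_le _
    _ = q.factorial := by rw [List.length_permutations, List.length_ofFn]

/-- unweighted AM-GM -/
lemma amgm {ι : Type*} [Fintype ι] [Nonempty ι] (y : ι → ℝ) (hy : ∀ i, 0 ≤ y i) :
    ∏ i, y i ≤ (Fintype.card ι : ℝ)⁻¹ * ∑ i, y i ^ (Fintype.card ι) := by
  have hn : (0:ℝ) < Fintype.card ι := by exact_mod_cast Fintype.card_pos
  have hkey := Real.geom_mean_le_arith_mean_weighted Finset.univ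
      (fun _ : ι => (Fintype.card ι : ℝ)⁻¹) (fun i => y i ^ (Fintype.card ι))
      (fun _ _ => by positivity)
      (by rw [Finset.sum_const, Finset.card_univ, nsmul_eq_mul, mul_inv_cancel₀ hn.ne'])
      (fun i _ => pow_nonneg (hy i) _)
  have hLHS : ∀ i : ι, ((y i ^ (Fintype.card ι)) : ℝ) ^ ((Fintype.card ι : ℝ)⁻¹) = y i := by
    intro i
    rw [← Real.rpow_natCast (y i) (Fintype.card ι), ← Real.rpow_mul (hy i)]
    rw [mul_inv_cancel₀ hn.ne', Real.rpow_one]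
  calc ∏ i, y i = ∏ i, ((y i ^ (Fintype.card ι)) : ℝ) ^ ((Fintype.card ι : ℝ)⁻¹) := by
        simp [hLHS]
    _ ≤ ∑ i, (Fintype.card ι : ℝ)⁻¹ * y i ^ (Fintype.card ι) := hkey
    _ = (Fintype.card ι : ℝ)⁻¹ * ∑ i, y i ^ (Fintype.card ι) := by rw [← Finset.mul_sum]

lemma fiber_prod {q d : ℕ} {M : Type*} [CommMonoid M] (f : Fin q → Fin d) (h : Fin d → M) :
    ∏ i, h (f i) = ∏ l, h l ^ (Finset.univ.filter fun i => f i = l).card := by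
  classical
  have hpc := Finset.prod_comp (s := (Finset.univ : Finset (Fin q))) h f
  rw [hpc]
  refine Finset.prod_subset (f := fun l => h l ^ (Finset.univ.filter fun i => f i = l).card) (Finset.subset_univ _) ?_
  intro x _ hx
  have hz : (Finset.univ.filter fun i => f i = x).card = 0 := by
    rw [Finset.card_eq_zero, Finset.filter_eq_empty_iff]
    intro i _
    exact fun h' => hx (Finset.mem_image.mpr ⟨i, Finset.mem_univ i, h'⟩)
  rw [hz, pow_zero]

lemma W_eval {q d m : ℕ} (hm : q < m) (f g : Fin q → Fin d) :
    ∑ ε : Fin d → Fin m,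
        (∏ i, (wroot m) ^ ((ε (f i) : ℕ))) *
          ∏ i, (starRingEnd ℂ) ((wroot m) ^ ((ε (g i) : ℕ)))
      = if (∀ l, (Finset.univ.filter fun i => f i = l).card
              = (Finset.univ.filter fun i => g i = l).card)
          then (m : ℂ) ^ d else 0 := by
  classical
  have hm0 : 0 < m := lt_of_le_of_lt (Nat.zero_le q) hm
  have cnt_lt : ∀ (f : Fin q → Fin d) (l : Fin d),
      (Finset.univ.filter fun i => f i = l).card < m := by
    intro f l
    calc (Finset.univ.filter fun i => f i = l).card
        ≤ Finset.univ.card := Finset.card_filter_le _ _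
      _ = q := Finset.card_univ.trans (Fintype.card_fin q)
      _ < m := hm
  have hstep : ∀ ε : Fin d → Fin m,
      (∏ i, (wroot m) ^ ((ε (f i) : ℕ))) *
        ∏ i, (starRingEnd ℂ) ((wroot m) ^ ((ε (g i) : ℕ)))
      = ∏ l, ((wroot m) ^ ((Finset.univ.filter fun i => f i = l).card * (ε l : ℕ)) *
          (starRingEnd ℂ) ((wroot m) ^ ((Finset.univ.filter fun i => g i = l).card * (ε l : ℕ)))) := by
    intro ε
    rw [fiber_prod f (fun l => (wroot m) ^ ((ε l : ℕ))),
      fiber_prod g (fun l => (starRingEnd ℂ) ((wroot m) ^ ((ε l : ℕ)))),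
      ← Finset.prod_mul_distrib]
    refine Finset.prod_congr rfl fun l _ => ?_
    rw [← pow_mul', ← map_pow, ← pow_mul']
  simp_rw [hstep]
  rw [← Fintype.prod_sum
    (f := fun l (e : Fin m) => (wroot m) ^ ((Finset.univ.filter fun i => f i = l).card * (e : ℕ)) *
      (starRingEnd ℂ) ((wroot m) ^ ((Finset.univ.filter fun i => g i = l).card * (e : ℕ))))]
  have hfactor : ∀ l : Fin d,
      (∑ e : Fin m, (wroot m) ^ ((Finset.univ.filter fun i => f i = l).card * (e : ℕ)) *
        (starRingEnd ℂ) ((wroot m) ^ ((Finset.univ.filter fun i => g i = l).card * (e : ℕ))))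
      = if (Finset.univ.filter fun i => f i = l).card
          = (Finset.univ.filter fun i => g i = l).card then (m : ℂ) else 0 :=
    fun l => wroot_ortho hm0 (cnt_lt f l) (cnt_lt g l)
  rw [Finset.prod_congr rfl fun l _ => hfactor l]
  by_cases h : ∀ l, (Finset.univ.filter fun i => f i = l).card
      = (Finset.univ.filter fun i => g i = l).card
  · rw [if_pos h]
    rw [Finset.prod_congr rfl fun l _ => if_pos (h l), Finset.prod_const, Finset.card_univ,
      Fintype.card_fin]
  · rw [if_neg h]
    push_neg at h
    obtain ⟨l0, hl0⟩ := h
    exact Finset.prod_eq_zero (Finset.mem_univ l0) (if_neg hl0)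

lemma key_avg {q d m : ℕ} (hm : q < m) (c : Fin d → ℂ)
    (hc : ∑ l, Complex.normSq (c l) = 1) :
    ∑ ε : Fin d → Fin m, ‖∑ l, (wroot m) ^ ((ε l : ℕ)) * c l‖ ^ (2 * q)
      ≤ (m : ℝ) ^ d * q.factorial := by
  classical
  set ζ := wroot m with hζ
  set S : (Fin d → Fin m) → ℂ := fun ε => ∑ l, ζ ^ ((ε l : ℕ)) * c l with hS
  set P : (Fin q → Fin d) → ℂ := fun f => ∏ i, c (f i) with hP
  -- expansion of the power
  have h1 : ∀ ε, (S ε) ^ q = ∑ f : Fin q → Fin d, (∏ i, ζ ^ ((ε (f i) : ℕ))) * P f := by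
    intro ε
    rw [hS]
    rw [Fintype.sum_pow (fun l => ζ ^ ((ε l : ℕ)) * c l) q]
    exact Finset.sum_congr rfl fun f _ => Finset.prod_mul_distrib
  have h2 : ∀ ε, ((starRingEnd ℂ) (S ε)) ^ q
      = ∑ g : Fin q → Fin d, (∏ i, (starRingEnd ℂ) (ζ ^ ((ε (g i) : ℕ)))) * (starRingEnd ℂ) (P g) := by
    intro ε
    rw [← map_pow, h1, map_sum]
    exact Finset.sum_congr rfl fun g _ => by rw [map_mul, map_prod]
  have hexp : ∀ ε, (S ε) ^ q * ((starRingEnd ℂ) (S ε)) ^ q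
      = ∑ f : Fin q → Fin d, ∑ g : Fin q → Fin d,
          ((∏ i, ζ ^ ((ε (f i) : ℕ))) * ∏ i, (starRingEnd ℂ) (ζ ^ ((ε (g i) : ℕ))))
            * (P f * (starRingEnd ℂ) (P g)) := by
    intro ε
    rw [h1, h2, Finset.sum_mul_sum]
    exact Finset.sum_congr rfl fun f _ => Finset.sum_congr rfl fun g _ => by ring
  -- main complex identity
  have main : ∑ ε : Fin d → Fin m, (S ε) ^ q * ((starRingEnd ℂ) (S ε)) ^ q
      = ∑ f : Fin q → Fin d, ∑ g : Fin q → Fin d,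
          (if (∀ l, (Finset.univ.filter fun i => f i = l).card
              = (Finset.univ.filter fun i => g i = l).card) then (m : ℂ) ^ d else 0)
            * (P f * (starRingEnd ℂ) (P g)) := by
    simp_rw [hexp]
    rw [Finset.sum_comm]
    refine Finset.sum_congr rfl fun f _ => ?_
    rw [Finset.sum_comm]
    refine Finset.sum_congr rfl fun g _ => ?_
    rw [← Finset.sum_mul, W_eval hm f g]
  -- realness
  have hreal : ∀ ε, (S ε) ^ q * ((starRingEnd ℂ) (S ε)) ^ q
      = ((‖S ε‖ ^ (2 * q) : ℝ) : ℂ) := by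
    intro ε
    rw [← mul_pow, Complex.mul_conj, pow_mul, Complex.sq_norm]
    push_cast
    ring
  -- RHS as a real number
  have hPmatch : ∀ f g : Fin q → Fin d,
      (∀ l, (Finset.univ.filter fun i => f i = l).card
          = (Finset.univ.filter fun i => g i = l).card) → P g = P f := by
    intro f g h
    rw [hP]
    simp only []
    rw [fiber_prod f c, fiber_prod g c]
    exact Finset.prod_congr rfl fun l _ => by rw [h l]
  set R : ℝ := ∑ f : Fin q → Fin d, ∑ g : Fin q → Fin d,
      (if (∀ l, (Finset.univ.filter fun i => f i = l).card
          = (Finset.univ.filter fun i => g i = l).card)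
        then (m : ℝ) ^ d * Complex.normSq (P f) else 0) with hR
  have hRC : ((R : ℝ) : ℂ) = ∑ f : Fin q → Fin d, ∑ g : Fin q → Fin d,
      (if (∀ l, (Finset.univ.filter fun i => f i = l).card
          = (Finset.univ.filter fun i => g i = l).card) then (m : ℂ) ^ d else 0)
        * (P f * (starRingEnd ℂ) (P g)) := by
    rw [hR]
    push_cast
    refine Finset.sum_congr rfl fun f _ => Finset.sum_congr rfl fun g _ => ?_
    by_cases h : ∀ l, (Finset.univ.filter fun i => f i = l).card
        = (Finset.univ.filter fun i => g i = l).card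
    · rw [if_pos h, if_pos h, hPmatch f g h, Complex.mul_conj]
      push_cast
      ring
    · rw [if_neg h, if_neg h, zero_mul]
      push_cast
      ring
  -- identify the LHS with R
  have hLR : ∑ ε : Fin d → Fin m, ‖S ε‖ ^ (2 * q) = R := by
    have : ((∑ ε : Fin d → Fin m, ‖S ε‖ ^ (2 * q) : ℝ) : ℂ) = ((R : ℝ) : ℂ) := by
      rw [hRC, ← main]
      push_cast
      exact Finset.sum_congr rfl fun ε _ => by rw [hreal ε]; norm_cast
    exact_mod_cast this
  -- bound R
  have hbound : R ≤ (m : ℝ) ^ d * q.factorial * ∑ f : Fin q → Fin d, Complex.normSq (P f) := by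
    rw [hR, Finset.mul_sum]
    refine Finset.sum_le_sum fun f _ => ?_
    rw [Finset.sum_ite, Finset.sum_const, Finset.sum_const_zero, add_zero, nsmul_eq_mul]
    have hcard : ((Finset.univ.filter fun g : Fin q → Fin d =>
        ∀ l, (Finset.univ.filter fun i => f i = l).card
            = (Finset.univ.filter fun i => g i = l).card).card : ℝ) ≤ q.factorial := by
      have h := count_matching_le f
      have heq : (Finset.univ.filter fun g : Fin q → Fin d =>
          ∀ l, (Finset.univ.filter fun i => f i = l).card
              = (Finset.univ.filter fun i => g i = l).card)
          = (Finset.univ.filter fun g : Fin q → Fin d =>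
          ∀ l, (Finset.univ.filter fun i => g i = l).card
              = (Finset.univ.filter fun i => f i = l).card) := by
        refine Finset.filter_congr fun g _ => ?_
        constructor
        · intro hh l; exact (hh l).symm
        · intro hh l; exact (hh l).symm
      rw [heq]
      exact_mod_cast h
    calc ((Finset.univ.filter fun g : Fin q → Fin d =>
          ∀ l, (Finset.univ.filter fun i => f i = l).card
              = (Finset.univ.filter fun i => g i = l).card).card : ℝ)
          * ((m : ℝ) ^ d * Complex.normSq (P f))
        ≤ (q.factorial : ℝ) * ((m : ℝ) ^ d * Complex.normSq (P f)) := by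
          exact mul_le_mul_of_nonneg_right hcard
            (mul_nonneg (by positivity) (Complex.normSq_nonneg _))
      _ = (m : ℝ) ^ d * (q.factorial : ℝ) * Complex.normSq (P f) := by ring
  have hsum1 : ∑ f : Fin q → Fin d, Complex.normSq (P f) = 1 := by
    have : ∀ f : Fin q → Fin d, Complex.normSq (P f) = ∏ i, Complex.normSq (c (f i)) := by
      intro f
      rw [hP]
      simp only []
      exact map_prod Complex.normSq _ _
    simp_rw [this]
    rw [← Fintype.sum_pow (fun l => Complex.normSq (c l)) q, hc, one_pow]
  calc ∑ ε : Fin d → Fin m, ‖S ε‖ ^ (2 * q) = R := hLR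
    _ ≤ (m : ℝ) ^ d * q.factorial * ∑ f : Fin q → Fin d, Complex.normSq (P f) := hbound
    _ = (m : ℝ) ^ d * q.factorial := by rw [hsum1, mul_one]

open MeasureTheory

lemma normSq_wroot_pow' (n e : ℕ) : Complex.normSq ((wroot n) ^ e) = 1 := by
  have := normSq_wroot_pow n e
  rw [mul_comm, Complex.mul_conj] at this
  exact_mod_cast this

section Moment

variable {d : ℕ}
variable [MeasurableSpace (Matrix.unitaryGroup (Fin d) ℂ)]
variable [BorelSpace (Matrix.unitaryGroup (Fin d) ℂ)]

lemma cont_entry_fun (j k : Fin d) :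
    Continuous fun Ψ : Matrix.unitaryGroup (Fin d) ℂ => Ψ.1 j k :=
  (continuous_apply k).comp ((continuous_apply j).comp continuous_subtype_val)

lemma cont_mul_left (G : Matrix.unitaryGroup (Fin d) ℂ) :
    Continuous fun Ψ : Matrix.unitaryGroup (Fin d) ℂ => G * Ψ := by
  apply continuous_induced_rng.2
  have : (fun Ψ : Matrix.unitaryGroup (Fin d) ℂ => ((G * Ψ : Matrix.unitaryGroup (Fin d) ℂ) : Matrix (Fin d) (Fin d) ℂ))
      = fun Ψ : Matrix.unitaryGroup (Fin d) ℂ => (G : Matrix (Fin d) (Fin d) ℂ) * (Ψ : Matrix (Fin d) (Fin d) ℂ) := rfl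
  exact continuous_const.matrix_mul continuous_subtype_val

lemma integrable_bdd (P : Measure (Matrix.unitaryGroup (Fin d) ℂ)) [IsProbabilityMeasure P]
    {F : Matrix.unitaryGroup (Fin d) ℂ → ℝ} (hF : Continuous F) (B : ℝ)
    (hB : ∀ x, ‖F x‖ ≤ B) : Integrable F P :=
  (integrable_const B).mono' hF.aestronglyMeasurable (Filter.Eventually.of_forall hB)

lemma moment_bound {q : ℕ} (hd : 0 < d)
    (P : Measure (Matrix.unitaryGroup (Fin d) ℂ)) [IsProbabilityMeasure P]
    (hP : ∀ g : Matrix.unitaryGroup (Fin d) ℂ, P.map (fun x => g * x) = P)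
    (j k : Fin d) :
    ∫ Ψ, ‖Ψ.1 j k‖ ^ (2 * q) ∂P ≤ (q.factorial : ℝ) / (d : ℝ) ^ q := by
  classical
  set m := q + 1 with hm
  have hqm : q < m := Nat.lt_succ_self q
  -- the unitaries
  set G : (Fin d → Fin m) → Matrix.unitaryGroup (Fin d) ℂ :=
    fun ε => ⟨gmat d m ε, gmat_mem hd ε⟩ with hG
  -- single-term continuity and bound
  have contF : ∀ ε : Fin d → Fin m,
      Continuous fun Ψ : Matrix.unitaryGroup (Fin d) ℂ => ‖(G ε * Ψ).1 j k‖ ^ (2 * q) :=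
    fun ε => (((cont_entry_fun j k).comp (cont_mul_left (G ε))).norm).pow _
  have bndF : ∀ (ε : Fin d → Fin m) (Ψ : Matrix.unitaryGroup (Fin d) ℂ),
      ‖(G ε * Ψ).1 j k‖ ^ (2 * q) ≤ 1 := fun ε Ψ =>
    pow_le_one₀ (norm_nonneg _) (entry_norm_le _ j k)
  -- invariance: each shifted integral is the original one
  have hinv : ∀ ε : Fin d → Fin m,
      ∫ Ψ, ‖Ψ.1 j k‖ ^ (2 * q) ∂P = ∫ Ψ, ‖(G ε * Ψ).1 j k‖ ^ (2 * q) ∂P := by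
    intro ε
    conv_lhs => rw [← hP (G ε)]
    rw [integral_map (Measurable.aemeasurable ((cont_mul_left (G ε)).measurable))
      (f := fun Ψ : Matrix.unitaryGroup (Fin d) ℂ => ‖Ψ.1 j k‖ ^ (2 * q))
      (((cont_entry_fun j k).norm.pow _).aestronglyMeasurable)]
  -- pointwise bound on the ε-average
  have hpt : ∀ Ψ : Matrix.unitaryGroup (Fin d) ℂ,
      ∑ ε : Fin d → Fin m, ‖(G ε * Ψ).1 j k‖ ^ (2 * q)
        ≤ (m : ℝ) ^ d * q.factorial / (d : ℝ) ^ q := by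
    intro Ψ
    set c : Fin d → ℂ := fun l => (wroot d) ^ ((j : ℕ) * (l : ℕ)) * Ψ.1 l k with hc
    have hcsum : ∑ l, Complex.normSq (c l) = 1 := by
      rw [← col_normSq Ψ k]
      refine Finset.sum_congr rfl fun l _ => ?_
      rw [hc]
      simp only []
      rw [Complex.normSq_mul, normSq_wroot_pow', one_mul]
    have hentry : ∀ ε : Fin d → Fin m,
        (G ε * Ψ).1 j k = (Real.sqrt d : ℂ)⁻¹ * ∑ l, (wroot m) ^ ((ε l : ℕ)) * c l := by
      intro ε
      have hcoe : (G ε * Ψ).1 = gmat d m ε * Ψ.1 := rfl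
      rw [hcoe, Matrix.mul_apply, Finset.mul_sum]
      refine Finset.sum_congr rfl fun l _ => ?_
      rw [hc]
      simp only [gmat]
      ring
    have hnorm : ∀ ε : Fin d → Fin m,
        ‖(G ε * Ψ).1 j k‖ ^ (2 * q)
          = ((d : ℝ) ^ q)⁻¹ * ‖∑ l, (wroot m) ^ ((ε l : ℕ)) * c l‖ ^ (2 * q) := by
      intro ε
      rw [hentry ε, norm_mul, mul_pow]
      congr 1
      rw [norm_inv, Complex.norm_real, Real.norm_eq_abs,
        _root_.abs_of_nonneg (Real.sqrt_nonneg _), inv_pow, pow_mul,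
        Real.sq_sqrt (by positivity : (0:ℝ) ≤ (d:ℝ))]
    calc ∑ ε : Fin d → Fin m, ‖(G ε * Ψ).1 j k‖ ^ (2 * q)
        = ((d : ℝ) ^ q)⁻¹ * ∑ ε : Fin d → Fin m, ‖∑ l, (wroot m) ^ ((ε l : ℕ)) * c l‖ ^ (2 * q) := by
          rw [Finset.mul_sum]
          exact Finset.sum_congr rfl fun ε _ => hnorm ε
      _ ≤ ((d : ℝ) ^ q)⁻¹ * ((m : ℝ) ^ d * q.factorial) := by
          apply mul_le_mul_of_nonneg_left (key_avg hqm c hcsum)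
          positivity
      _ = (m : ℝ) ^ d * q.factorial / (d : ℝ) ^ q := by ring
  -- average over ε
  have hmd : (0 : ℝ) < (m : ℝ) ^ d := by positivity
  have havg : ∫ Ψ, ‖Ψ.1 j k‖ ^ (2 * q) ∂P
      = ((m : ℝ) ^ d)⁻¹ * ∑ ε : Fin d → Fin m, ∫ Ψ, ‖(G ε * Ψ).1 j k‖ ^ (2 * q) ∂P := by
    rw [Finset.sum_congr rfl fun ε _ => (hinv ε).symm, Finset.sum_const, nsmul_eq_mul,
      Finset.card_univ]
    have hcard : (Fintype.card (Fin d → Fin m) : ℝ) = (m : ℝ) ^ d := by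
      rw [Fintype.card_fun, Fintype.card_fin, Fintype.card_fin]
      push_cast
      ring
    rw [hcard, ← mul_assoc, inv_mul_cancel₀ hmd.ne', one_mul]
  rw [havg, ← integral_finset_sum _
    (fun ε _ => integrable_bdd P (contF ε) 1 (fun Ψ => by
      rw [Real.norm_eq_abs, _root_.abs_of_nonneg (by positivity)]; exact bndF ε Ψ))]
  have hle : ∫ Ψ, (∑ ε : Fin d → Fin m, ‖(G ε * Ψ).1 j k‖ ^ (2 * q)) ∂P
      ≤ (m : ℝ) ^ d * q.factorial / (d : ℝ) ^ q := by
    calc ∫ Ψ, (∑ ε : Fin d → Fin m, ‖(G ε * Ψ).1 j k‖ ^ (2 * q)) ∂P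
        ≤ ∫ _Ψ, ((m : ℝ) ^ d * q.factorial / (d : ℝ) ^ q) ∂P := by
          apply integral_mono
          · exact integrable_finset_sum _ (fun ε _ => integrable_bdd P (contF ε) 1 (fun Ψ => by
              rw [Real.norm_eq_abs, _root_.abs_of_nonneg (by positivity)]; exact bndF ε Ψ))
          · exact integrable_const _
          · exact hpt
      _ = (m : ℝ) ^ d * q.factorial / (d : ℝ) ^ q := by
          rw [integral_const, probReal_univ, one_smul]
  calc ((m : ℝ) ^ d)⁻¹ * ∫ Ψ, (∑ ε : Fin d → Fin m, ‖(G ε * Ψ).1 j k‖ ^ (2 * q)) ∂P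
      ≤ ((m : ℝ) ^ d)⁻¹ * ((m : ℝ) ^ d * q.factorial / (d : ℝ) ^ q) :=
        mul_le_mul_of_nonneg_left hle (by positivity)
    _ = (q.factorial : ℝ) / (d : ℝ) ^ q := by field_simp

end Moment

/-- Uniform Weingarten bound: for every `q ≥ 1` there is `C_q` such that in the stable range
`d ≥ q`, any `2q`-th mixed moment of entries of a Haar unitary `d × d` matrix is at most
`C_q d^{-q}` in absolute value. -/
theorem stmt10 (q : ℕ) (hq : 1 ≤ q) :
    ∃ C > (0 : ℝ), ∀ d : ℕ, q ≤ d →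
      ∀ [MeasurableSpace (Matrix.unitaryGroup (Fin d) ℂ)]
        [BorelSpace (Matrix.unitaryGroup (Fin d) ℂ)]
        (P : Measure (Matrix.unitaryGroup (Fin d) ℂ)) [IsProbabilityMeasure P],
        (∀ g : Matrix.unitaryGroup (Fin d) ℂ, P.map (fun x => g * x) = P) →
        ∀ js ks js' ks' : Fin q → Fin d,
          ‖∫ Ψ, (∏ i, Ψ.1 (js i) (ks i)) *
            ∏ i, (starRingEnd ℂ) (Ψ.1 (js' i) (ks' i)) ∂P‖ ≤ C / (d : ℝ) ^ q := by
  classical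
  refine ⟨(q.factorial : ℝ), by exact_mod_cast q.factorial_pos, ?_⟩
  intro d hd _inst1 _inst2 P _instP hP js ks js' ks'
  have hd0 : 0 < d := lt_of_lt_of_le hq hd
  set J : Fin q ⊕ Fin q → Fin d := Sum.elim js js' with hJ
  set K : Fin q ⊕ Fin q → Fin d := Sum.elim ks ks' with hK
  set Y : (Fin q ⊕ Fin q) → Matrix.unitaryGroup (Fin d) ℂ → ℝ :=
    fun s Ψ => ‖Ψ.1 (J s) (K s)‖ with hY
  have hne : Nonempty (Fin q ⊕ Fin q) := ⟨Sum.inl ⟨0, hq⟩⟩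
  have hcard : Fintype.card (Fin q ⊕ Fin q) = 2 * q := by
    rw [Fintype.card_sum, Fintype.card_fin]
    ring
  have hFnorm : ∀ Ψ : Matrix.unitaryGroup (Fin d) ℂ,
      ‖(∏ i, Ψ.1 (js i) (ks i)) * ∏ i, (starRingEnd ℂ) (Ψ.1 (js' i) (ks' i))‖
        = ∏ s : Fin q ⊕ Fin q, Y s Ψ := by
    intro Ψ
    rw [Fintype.prod_sum_type, norm_mul, norm_prod, norm_prod]
    congr 1
    refine Finset.prod_congr rfl fun i _ => ?_
    rw [hY]
    simp [RCLike.norm_conj, hJ, hK]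
  -- pointwise AM-GM
  have hAMGM : ∀ Ψ : Matrix.unitaryGroup (Fin d) ℂ,
      ‖(∏ i, Ψ.1 (js i) (ks i)) * ∏ i, (starRingEnd ℂ) (Ψ.1 (js' i) (ks' i))‖
        ≤ ((2 * q : ℕ) : ℝ)⁻¹ * ∑ s : Fin q ⊕ Fin q, Y s Ψ ^ (2 * q) := by
    intro Ψ
    rw [hFnorm Ψ]
    have := amgm (fun s : Fin q ⊕ Fin q => Y s Ψ) (fun s => norm_nonneg _)
    rw [hcard] at this
    exact_mod_cast this
  -- integrability
  have contY : ∀ s, Continuous fun Ψ : Matrix.unitaryGroup (Fin d) ℂ => Y s Ψ ^ (2 * q) :=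
    fun s => ((cont_entry_fun (J s) (K s)).norm).pow _
  have intY : ∀ s, Integrable (fun Ψ => Y s Ψ ^ (2 * q)) P := by
    intro s
    refine integrable_bdd P (contY s) 1 fun Ψ => ?_
    rw [Real.norm_eq_abs, _root_.abs_of_nonneg (by positivity)]
    exact pow_le_one₀ (norm_nonneg _) (entry_norm_le Ψ _ _)
  have contF : Continuous fun Ψ : Matrix.unitaryGroup (Fin d) ℂ =>
      (∏ i, Ψ.1 (js i) (ks i)) * ∏ i, (starRingEnd ℂ) (Ψ.1 (js' i) (ks' i)) := by
    apply Continuous.mul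
    · exact continuous_finset_prod _ fun i _ => cont_entry_fun _ _
    · exact continuous_finset_prod _ fun i _ => (continuous_conj).comp (cont_entry_fun _ _)
  have intNormF : Integrable (fun Ψ : Matrix.unitaryGroup (Fin d) ℂ =>
      ‖(∏ i, Ψ.1 (js i) (ks i)) * ∏ i, (starRingEnd ℂ) (Ψ.1 (js' i) (ks' i))‖) P := by
    refine integrable_bdd P contF.norm 1 fun Ψ => ?_
    rw [norm_norm, hFnorm Ψ]
    exact Finset.prod_le_one (fun s _ => norm_nonneg _) (fun s _ => entry_norm_le Ψ _ _)
  have h2q : (0 : ℝ) < ((2 * q : ℕ) : ℝ) := by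
    have : 0 < 2 * q := by omega
    exact_mod_cast this
  calc ‖∫ Ψ, (∏ i, Ψ.1 (js i) (ks i)) *
        ∏ i, (starRingEnd ℂ) (Ψ.1 (js' i) (ks' i)) ∂P‖
      ≤ ∫ Ψ, ‖(∏ i, Ψ.1 (js i) (ks i)) *
          ∏ i, (starRingEnd ℂ) (Ψ.1 (js' i) (ks' i))‖ ∂P := norm_integral_le_integral_norm _
    _ ≤ ∫ Ψ, ((2 * q : ℕ) : ℝ)⁻¹ * ∑ s : Fin q ⊕ Fin q, Y s Ψ ^ (2 * q) ∂P := by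
        refine integral_mono intNormF ?_ hAMGM
        exact (integrable_finset_sum _ fun s _ => intY s).const_mul _
    _ = ((2 * q : ℕ) : ℝ)⁻¹ * ∑ s : Fin q ⊕ Fin q, ∫ Ψ, Y s Ψ ^ (2 * q) ∂P := by
        rw [integral_const_mul, integral_finset_sum _ fun s _ => intY s]
    _ ≤ ((2 * q : ℕ) : ℝ)⁻¹ * ∑ _s : Fin q ⊕ Fin q, (q.factorial : ℝ) / (d : ℝ) ^ q := by
        apply mul_le_mul_of_nonneg_left _ (by positivity)
        exact Finset.sum_le_sum fun s _ => moment_bound hd0 P hP (J s) (K s)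
    _ = (q.factorial : ℝ) / (d : ℝ) ^ q := by
        rw [Finset.sum_const, Finset.card_univ, hcard, nsmul_eq_mul]
        rw [← mul_assoc, inv_mul_cancel₀ h2q.ne', one_mul]
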